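/- Let A be an antisymmetric n×n matrix with Poisson bracket {x_i,x_j} = A_{ij}x_ix_j, satisfying A_{h,i} = A_{1,i} whenever i > h+1 or i = h+1 with h odd. Then for j > i+1, or j = i+1 with i odd, we have {P_{1,i}, x_j} = A_{1,j} P_{1,i} x_j, where P_{1,i} = x₁+⋯+x_i. Consequently, any weight-zero homogeneous product of powers of P_{1,2i+1}, P_{1,2i-1}, x_{2i}, x_{2i+1} Poisson commutes with x_j for all j > 2i+1. -/

import Mathlib

open Real Finset

/-- i-th component of the gradient of `F` at `x`. -/
noncomputable def grad {n : ℕ} (F : (Fin n → ℝ) → ℝ) (x : Fin n → ℝ) (i : Fin n) : ℝ :=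
  fderiv ℝ F x (Pi.single i 1)

/-- Lie derivative (directional derivative) of `F` along the vector field `f` at `x`. -/
noncomputable def lieDeriv {n : ℕ} (F : (Fin n → ℝ) → ℝ) (f : (Fin n → ℝ) → Fin n → ℝ)
    (x : Fin n → ℝ) : ℝ := ∑ i, grad F x i * f x i

/-- The Poisson bracket {F,G}(x) = Σ_{i,j} A_{ij} x_i x_j ∂_iF ∂_jG. -/
noncomputable def pbracket {n : ℕ} (A : Matrix (Fin n) (Fin n) ℝ)
    (F G : (Fin n → ℝ) → ℝ) (x : Fin n → ℝ) : ℝ :=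
  ∑ i, ∑ j, A i j * x i * x j * grad F x i * grad G x j

/-- The (possibly inhomogeneous) Lotka-Volterra vector field
`f_i(x) = x_i (r_i + Σ_j A_{ij} x_j)`. -/
def lvField {n : ℕ} (A : Matrix (Fin n) (Fin n) ℝ) (r : Fin n → ℝ)
    (x : Fin n → ℝ) (i : Fin n) : ℝ := x i * (r i + ∑ j, A i j * x j)

lemma hasFDerivAt_sum {n : ℕ} (s : Finset (Fin n)) (x : Fin n → ℝ) :
    HasFDerivAt (fun y : Fin n → ℝ => ∑ k ∈ s, y k)
      (∑ k ∈ s, (ContinuousLinearMap.proj k : (Fin n → ℝ) →L[ℝ] ℝ)) x := by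
  have : HasFDerivAt (fun y : Fin n → ℝ => ∑ k ∈ s, y k)
      (∑ k ∈ s, (ContinuousLinearMap.proj k : (Fin n → ℝ) →L[ℝ] ℝ)) x :=
    HasFDerivAt.fun_sum (fun k _ => (ContinuousLinearMap.proj k : (Fin n → ℝ) →L[ℝ] ℝ).hasFDerivAt)
  exact this

lemma sum_proj_single {n : ℕ} (s : Finset (Fin n)) (i : Fin n) :
    (∑ k ∈ s, (ContinuousLinearMap.proj k : (Fin n → ℝ) →L[ℝ] ℝ)) (Pi.single i 1)
      = if i ∈ s then 1 else 0 := by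
  rw [ContinuousLinearMap.sum_apply]
  simp [ContinuousLinearMap.proj_apply, Pi.single_apply]

lemma grad_sum {n : ℕ} (s : Finset (Fin n)) (x : Fin n → ℝ) (i : Fin n) :
    grad (fun y => ∑ k ∈ s, y k) x i = if i ∈ s then 1 else 0 := by
  rw [grad, (hasFDerivAt_sum s x).fderiv, sum_proj_single]

lemma grad_coord {n : ℕ} (j : Fin n) (x : Fin n → ℝ) (i : Fin n) :
    grad (fun y => y j) x i = if i = j then 1 else 0 := by
  have : grad (fun y : Fin n → ℝ => ∑ k ∈ {j}, y k) x i = if i ∈ ({j} : Finset (Fin n)) then 1 else 0 := grad_sum {j} x i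
  simpa using this

lemma pb_coord_right {n : ℕ} (A : Matrix (Fin n) (Fin n) ℝ) (F : (Fin n → ℝ) → ℝ)
    (j : Fin n) (x : Fin n → ℝ) :
    pbracket A F (fun y => y j) x = ∑ i, A i j * x i * x j * grad F x i := by
  rw [pbracket]
  refine Finset.sum_congr rfl fun i _ => ?_
  rw [Finset.sum_eq_single j]
  · rw [grad_coord]; simp
  · intro l _ hl; rw [grad_coord]; simp [hl]
  · simp

lemma pb_sum_coord {n : ℕ} (A : Matrix (Fin n) (Fin n) ℝ) (s : Finset (Fin n))
    (j : Fin n) (x : Fin n → ℝ) :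
    pbracket A (fun y => ∑ k ∈ s, y k) (fun y => y j) x = ∑ k ∈ s, A k j * x k * x j := by
  rw [pb_coord_right]
  simp only [grad_sum, mul_ite, mul_one, mul_zero]
  rw [← Finset.sum_filter]
  congr 1
  · ext k; simp


lemma grad_prod {n : ℕ} (s1 s2 : Finset (Fin n)) (e3 e4 : Fin n) (α β γ δ : ℝ)
    (x : Fin n → ℝ) (hf1 : 0 < ∑ k ∈ s1, x k) (hf2 : 0 < ∑ k ∈ s2, x k)
    (hf3 : 0 < x e3) (hf4 : 0 < x e4) (i : Fin n) :
    grad (fun y => (∑ k ∈ s1, y k) ^ α * (∑ k ∈ s2, y k) ^ β * y e3 ^ γ * y e4 ^ δ) x i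
      = (α * (∑ k ∈ s1, x k) ^ (α - 1) * (∑ k ∈ s2, x k) ^ β * x e3 ^ γ * x e4 ^ δ)
            * (if i ∈ s1 then 1 else 0)
        + (β * (∑ k ∈ s1, x k) ^ α * (∑ k ∈ s2, x k) ^ (β - 1) * x e3 ^ γ * x e4 ^ δ)
            * (if i ∈ s2 then 1 else 0)
        + (γ * (∑ k ∈ s1, x k) ^ α * (∑ k ∈ s2, x k) ^ β * x e3 ^ (γ - 1) * x e4 ^ δ)
            * (if i = e3 then 1 else 0)
        + (δ * (∑ k ∈ s1, x k) ^ α * (∑ k ∈ s2, x k) ^ β * x e3 ^ γ * x e4 ^ (δ - 1))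
            * (if i = e4 then 1 else 0) := by
  have h1 : HasFDerivAt (fun y : Fin n → ℝ => (∑ k ∈ s1, y k) ^ α)
      ((α * (∑ k ∈ s1, x k) ^ (α - 1)) • ∑ k ∈ s1, (ContinuousLinearMap.proj k : (Fin n → ℝ) →L[ℝ] ℝ)) x :=
    (hasFDerivAt_sum s1 x).rpow_const (Or.inl hf1.ne')
  have h2 : HasFDerivAt (fun y : Fin n → ℝ => (∑ k ∈ s2, y k) ^ β)
      ((β * (∑ k ∈ s2, x k) ^ (β - 1)) • ∑ k ∈ s2, (ContinuousLinearMap.proj k : (Fin n → ℝ) →L[ℝ] ℝ)) x :=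
    (hasFDerivAt_sum s2 x).rpow_const (Or.inl hf2.ne')
  have h3 : HasFDerivAt (fun y : Fin n → ℝ => y e3 ^ γ)
      ((γ * x e3 ^ (γ - 1)) • (ContinuousLinearMap.proj e3 : (Fin n → ℝ) →L[ℝ] ℝ)) x :=
    ((ContinuousLinearMap.proj e3 : (Fin n → ℝ) →L[ℝ] ℝ).hasFDerivAt).rpow_const (Or.inl hf3.ne')
  have h4 : HasFDerivAt (fun y : Fin n → ℝ => y e4 ^ δ)
      ((δ * x e4 ^ (δ - 1)) • (ContinuousLinearMap.proj e4 : (Fin n → ℝ) →L[ℝ] ℝ)) x :=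
    ((ContinuousLinearMap.proj e4 : (Fin n → ℝ) →L[ℝ] ℝ).hasFDerivAt).rpow_const (Or.inl hf4.ne')
  have h := ((h1.fun_mul h2).fun_mul h3).fun_mul h4
  rw [grad, h.fderiv]
  simp only [ContinuousLinearMap.add_apply, ContinuousLinearMap.smul_apply,
    ContinuousLinearMap.proj_apply, sum_proj_single, Pi.single_apply, smul_eq_mul,
    eq_comm]
  ring

lemma part1 {n : ℕ} (hn : 0 < n) (A : Matrix (Fin n) (Fin n) ℝ)
    (hcond : ∀ h i : Fin n,
      (h.val + 1 < i.val ∨ (i.val = h.val + 1 ∧ Odd (h.val + 1))) →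
      A h i = A ⟨0, hn⟩ i) (m : ℕ) (j : Fin n)
    (hj : m + 1 < j.val + 1 ∨ (j.val + 1 = m + 1 ∧ Odd m)) (x : Fin n → ℝ) :
    pbracket A (fun y => ∑ k ∈ Finset.univ.filter (fun k : Fin n => k.val < m), y k)
        (fun y => y j) x
      = A ⟨0, hn⟩ j * (∑ k ∈ Finset.univ.filter (fun k : Fin n => k.val < m), x k) * x j := by
  rw [pb_sum_coord]
  have key : ∀ k ∈ Finset.univ.filter (fun k : Fin n => k.val < m),
      A k j = A ⟨0, hn⟩ j := by
    intro k hk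
    simp only [Finset.mem_filter, Finset.mem_univ, true_and] at hk
    apply hcond
    rcases hj with h | ⟨h, hodd⟩
    · left; omega
    · rcases Nat.lt_or_ge (k.val + 1) m with h' | h'
      · left; omega
      · right
        have : j.val = k.val + 1 := by omega
        refine ⟨this, ?_⟩
        have : k.val + 1 = m := by omega
        rw [this]; exact hodd
  rw [Finset.sum_congr rfl (fun k hk => by rw [key k hk])]
  rw [Finset.mul_sum, Finset.sum_mul]

lemma part2 {n : ℕ} (hn : 0 < n) (A : Matrix (Fin n) (Fin n) ℝ)
    (hcond : ∀ h i : Fin n,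
      (h.val + 1 < i.val ∨ (i.val = h.val + 1 ∧ Odd (h.val + 1))) →
      A h i = A ⟨0, hn⟩ i)
    (i : ℕ) (hi : 1 ≤ i) (h1 : 2 * i - 1 < n) (h2 : 2 * i < n) (α β γ δ : ℝ)
    (hsum : α + β + γ + δ = 0) (j : Fin n) (hj : 2 * i + 1 ≤ j.val)
    (x : Fin n → ℝ) (hx : ∀ k, 0 < x k) :
    pbracket A
      (fun y =>
        (∑ k ∈ Finset.univ.filter (fun k : Fin n => k.val < 2 * i + 1), y k) ^ α
        * (∑ k ∈ Finset.univ.filter (fun k : Fin n => k.val < 2 * i - 1), y k) ^ β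
        * (y ⟨2 * i - 1, h1⟩) ^ γ * (y ⟨2 * i, h2⟩) ^ δ)
      (fun y => y j) x = 0 := by
  set s1 : Finset (Fin n) := Finset.univ.filter (fun k : Fin n => k.val < 2 * i + 1) with hs1
  set s2 : Finset (Fin n) := Finset.univ.filter (fun k : Fin n => k.val < 2 * i - 1) with hs2
  set e3 : Fin n := ⟨2 * i - 1, h1⟩
  set e4 : Fin n := ⟨2 * i, h2⟩
  have hm1 : ((⟨0, hn⟩ : Fin n) ∈ s1) := by simp [hs1]
  have hm2 : ((⟨0, hn⟩ : Fin n) ∈ s2) := by simp [hs2]; omega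
  have hf1 : 0 < ∑ k ∈ s1, x k := Finset.sum_pos (fun k _ => hx k) ⟨_, hm1⟩
  have hf2 : 0 < ∑ k ∈ s2, x k := Finset.sum_pos (fun k _ => hx k) ⟨_, hm2⟩
  rw [pb_coord_right]
  rw [Finset.sum_congr rfl (fun l _ => by
    rw [grad_prod s1 s2 e3 e4 α β γ δ x hf1 hf2 (hx e3) (hx e4) l])]
  -- abbreviations
  set F1 : ℝ := ∑ k ∈ s1, x k
  set F2 : ℝ := ∑ k ∈ s2, x k
  set c1 : ℝ := α * F1 ^ (α - 1) * F2 ^ β * x e3 ^ γ * x e4 ^ δ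
  set c2 : ℝ := β * F1 ^ α * F2 ^ (β - 1) * x e3 ^ γ * x e4 ^ δ
  set c3 : ℝ := γ * F1 ^ α * F2 ^ β * x e3 ^ (γ - 1) * x e4 ^ δ
  set c4 : ℝ := δ * F1 ^ α * F2 ^ β * x e3 ^ γ * x e4 ^ (δ - 1)
  have expand : ∀ l : Fin n, A l j * x l * x j *
      (c1 * (if l ∈ s1 then 1 else 0) + c2 * (if l ∈ s2 then 1 else 0)
        + c3 * (if l = e3 then 1 else 0) + c4 * (if l = e4 then 1 else 0))
      = (if l ∈ s1 then c1 * (A l j * x l * x j) else 0)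
        + (if l ∈ s2 then c2 * (A l j * x l * x j) else 0)
        + (if l = e3 then c3 * (A l j * x l * x j) else 0)
        + (if l = e4 then c4 * (A l j * x l * x j) else 0) := by
    intro l
    split <;> split <;> split <;> split <;> ring
  rw [Finset.sum_congr rfl (fun l _ => expand l)]
  rw [Finset.sum_add_distrib, Finset.sum_add_distrib, Finset.sum_add_distrib]
  rw [← Finset.sum_filter, ← Finset.sum_filter]
  rw [Finset.sum_ite_eq' Finset.univ e3 (fun l => c3 * (A l j * x l * x j)),
    Finset.sum_ite_eq' Finset.univ e4 (fun l => c4 * (A l j * x l * x j))]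
  simp only [Finset.mem_univ, if_true]
  rw [Finset.filter_mem_eq_inter, Finset.filter_mem_eq_inter, Finset.univ_inter,
    Finset.univ_inter]
  have hodd : Odd (2 * i + 1) := ⟨i, by ring⟩
  have hA1 : ∀ a ∈ s1, A a j = A ⟨0, hn⟩ j := by
    intro a ha
    simp only [hs1, Finset.mem_filter, Finset.mem_univ, true_and] at ha
    apply hcond
    rcases Nat.lt_or_ge (a.val + 1) j.val with h | h
    · left; exact h
    · right
      have he : a.val + 1 = 2 * i + 1 := by omega
      exact ⟨by omega, by rw [he]; exact hodd⟩
  have hA2 : ∀ a ∈ s2, A a j = A ⟨0, hn⟩ j := by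
    intro a ha
    simp only [hs2, Finset.mem_filter, Finset.mem_univ, true_and] at ha
    apply hcond; left; omega
  have hA3 : A e3 j = A ⟨0, hn⟩ j := by
    apply hcond; left; show 2 * i - 1 + 1 < j.val; omega
  have hA4 : A e4 j = A ⟨0, hn⟩ j := by
    apply hcond
    have hv : e4.val = 2 * i := rfl
    rcases Nat.lt_or_ge (2 * i + 1) j.val with h | h
    · left; rw [hv]; omega
    · right; rw [hv]; exact ⟨by omega, hodd⟩
  have hS1 : ∑ a ∈ s1, c1 * (A a j * x a * x j)
      = c1 * A ⟨0, hn⟩ j * x j * F1 := by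
    simp only [F1, Finset.mul_sum]
    refine Finset.sum_congr rfl fun a ha => ?_
    rw [hA1 a ha]; ring
  have hS2 : ∑ a ∈ s2, c2 * (A a j * x a * x j)
      = c2 * A ⟨0, hn⟩ j * x j * F2 := by
    simp only [F2, Finset.mul_sum]
    refine Finset.sum_congr rfl fun a ha => ?_
    rw [hA2 a ha]; ring
  rw [hS1, hS2, hA3, hA4]
  have E1 : F1 ^ (α - 1) * F1 = F1 ^ α := by
    rw [← Real.rpow_add_one hf1.ne' (α - 1)]; norm_num
  have E2 : F2 ^ (β - 1) * F2 = F2 ^ β := by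
    rw [← Real.rpow_add_one hf2.ne' (β - 1)]; norm_num
  have E3 : x e3 ^ (γ - 1) * x e3 = x e3 ^ γ := by
    rw [← Real.rpow_add_one (hx e3).ne' (γ - 1)]; norm_num
  have E4 : x e4 ^ (δ - 1) * x e4 = x e4 ^ δ := by
    rw [← Real.rpow_add_one (hx e4).ne' (δ - 1)]; norm_num
  have hc : c1 * F1 + c2 * F2 + c3 * x e3 + c4 * x e4 = 0 := by
    simp only [c1, c2, c3, c4]
    linear_combination (F1 ^ α * F2 ^ β * x e3 ^ γ * x e4 ^ δ) * hsum
      + (α * F2 ^ β * x e3 ^ γ * x e4 ^ δ) * E1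
      + (β * F1 ^ α * x e3 ^ γ * x e4 ^ δ) * E2
      + (γ * F1 ^ α * F2 ^ β * x e4 ^ δ) * E3
      + (δ * F1 ^ α * F2 ^ β * x e3 ^ γ) * E4
  linear_combination (A ⟨0, hn⟩ j * x j) * hc

/-- under the structural condition on the antisymmetric matrix A,
{P_{1,m}, x_j} = A_{1,j} P_{1,m} x_j when j > m+1 or (j = m+1 with m odd)
(1-based), and consequently any weight-zero homogeneous product of powers of
P_{1,2i+1}, P_{1,2i-1}, x_{2i}, x_{2i+1} Poisson commutes with x_j for all j > 2i+1. -/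
theorem stmt11 {n : ℕ} (hn : 0 < n) (A : Matrix (Fin n) (Fin n) ℝ) (hA : A.transpose = -A)
    (hcond : ∀ h i : Fin n,
      (h.val + 1 < i.val ∨ (i.val = h.val + 1 ∧ Odd (h.val + 1))) →
      A h i = A ⟨0, hn⟩ i) :
    (∀ (m : ℕ) (j : Fin n),
      (m + 1 < j.val + 1 ∨ (j.val + 1 = m + 1 ∧ Odd m)) →
      ∀ x : Fin n → ℝ,
        pbracket A (fun y => ∑ k ∈ Finset.univ.filter (fun k : Fin n => k.val < m), y k)
            (fun y => y j) x
          = A ⟨0, hn⟩ j * (∑ k ∈ Finset.univ.filter (fun k : Fin n => k.val < m), x k) * x j)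
    ∧ (∀ (i : ℕ), 1 ≤ i → ∀ (h1 : 2 * i - 1 < n) (h2 : 2 * i < n) (α β γ δ : ℝ),
        α + β + γ + δ = 0 →
        ∀ j : Fin n, 2 * i + 1 ≤ j.val →
        ∀ x : Fin n → ℝ, (∀ k, 0 < x k) →
        pbracket A
          (fun y =>
            (∑ k ∈ Finset.univ.filter (fun k : Fin n => k.val < 2 * i + 1), y k) ^ α
            * (∑ k ∈ Finset.univ.filter (fun k : Fin n => k.val < 2 * i - 1), y k) ^ β
            * (y ⟨2 * i - 1, h1⟩) ^ γ * (y ⟨2 * i, h2⟩) ^ δ)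
          (fun y => y j) x = 0) := by
  exact ⟨fun m j hj x => part1 hn A hcond m j hj x,
    fun i hi h1 h2 α β γ δ hsum j hj x hx =>
      part2 hn A hcond i hi h1 h2 α β γ δ hsum j hj x hx⟩
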